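/- The weakening rule, from Γ ⇒ Δ infer Π,Γ ⇒ Δ,Σ, is strongly admissible in Grz∞+cut: there is a nonexpansive mapping wk_{Π,Σ} : 𝒫 → 𝒫 sending any ∞-proof of Γ ⇒ Δ to an ∞-proof of Π,Γ ⇒ Δ,Σ, which maps 𝒫₁ into 𝒫₁ and does not increase local height. -/

import Mathlib

/-- Modal formulas of the Grzegorczyk logic: ⊥, atoms, →, □. -/
inductive Formula : Type
  | bot : Formula
  | atom : ℕ → Formula
  | imp : Formula → Formula → Formula
  | box : Formula → Formula
deriving DecidableEq

/-- A sequent Γ ⇒ Δ is a pair of finite multisets of formulas. -/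
abbrev Sequent : Type := Multiset Formula × Multiset Formula

/-- Names of the inference rules of Grz∞ + cut (including the two kinds of initial sequents). -/
inductive Rule : Type
  | ax | axBot | impL | impR | refl | box | cut
deriving DecidableEq

/-- □Π for a multiset Π. -/
def boxed (P : Multiset Formula) : Multiset Formula := P.map Formula.box

/-- `Inst r s p₁ p₂` : the rule `r` has a (correct) instance with conclusion `s`,
first premise `p₁` and second premise `p₂` (`none` = no such premise). -/
inductive Inst : Rule → Sequent → Option Sequent → Option Sequent → Prop
  | ax (Γ Δ : Multiset Formula) (p : ℕ) :
      Inst .ax (Formula.atom p ::ₘ Γ, Formula.atom p ::ₘ Δ) none none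
  | axBot (Γ Δ : Multiset Formula) :
      Inst .axBot (Formula.bot ::ₘ Γ, Δ) none none
  | impL (Γ Δ : Multiset Formula) (A B : Formula) :
      Inst .impL (Formula.imp A B ::ₘ Γ, Δ) (some (B ::ₘ Γ, Δ)) (some (Γ, A ::ₘ Δ))
  | impR (Γ Δ : Multiset Formula) (A B : Formula) :
      Inst .impR (Γ, Formula.imp A B ::ₘ Δ) (some (A ::ₘ Γ, B ::ₘ Δ)) none
  | refl (Γ Δ : Multiset Formula) (A : Formula) :
      Inst .refl (Formula.box A ::ₘ Γ, Δ) (some (A ::ₘ Formula.box A ::ₘ Γ, Δ)) none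
  | box (Γ Δ : Multiset Formula) (A : Formula) (P : Multiset Formula) :
      Inst .box (Γ + boxed P, Formula.box A ::ₘ Δ) (some (Γ + boxed P, A ::ₘ Δ))
        (some (boxed P, {A}))
  | cut (Γ Δ : Multiset Formula) (A : Formula) :
      Inst .cut (Γ, Δ) (some (Γ, A ::ₘ Δ)) (some (A ::ₘ Γ, Δ))

/-- A labelling of tree addresses (lists of booleans; `true` = second/right child)
by a rule name together with a sequent; `none` means the address is outside the tree. -/
abbrev Lab : Type := List Bool → Option (Rule × Sequent)

/-- The labelling of the subtree at child `i`. -/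
def shift (i : Bool) (l : Lab) : Lab := fun a => l (i :: a)

/-- An ∞-proof in Grz∞ + cut: a possibly infinite tree of sequents built according to
the rules, in which every infinite branch passes through the right premise of the
rule (□) infinitely many times. -/
structure InfProof : Type where
  lab : Lab
  root_some : (lab []).isSome
  nojunk : ∀ (a : List Bool) (i : Bool), lab a = none → lab (a ++ [i]) = none
  step : ∀ (a : List Bool) (r : Rule) (s : Sequent), lab a = some (r, s) →
      Inst r s ((lab (a ++ [false])).map Prod.snd) ((lab (a ++ [true])).map Prod.snd)
  branch : ∀ f : ℕ → Bool, (∀ n : ℕ, (lab ((List.range n).map f)).isSome) →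
      ∀ N : ℕ, ∃ n : ℕ, N ≤ n ∧ f n = true ∧
        (lab ((List.range n).map f)).map Prod.fst = some Rule.box

/-- The sequent at the root of an ∞-proof. -/
def rootSeq (π : InfProof) : Sequent := ((π.lab []).map Prod.snd).getD (0, 0)

/-- `Proves π S` : the ∞-proof `π` is an ∞-proof of the sequent `S`. -/
def Proves (π : InfProof) (S : Sequent) : Prop := ∃ r : Rule, π.lab [] = some (r, S)

/-- An ∞-proof contains no application of the cut rule (i.e. it is a proof of Grz∞). -/
def NoCut (π : InfProof) : Prop := ∀ (a : List Bool) (r : Rule) (s : Sequent),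
  π.lab a = some (r, s) → r ≠ Rule.cut

/-- Membership of an address in the main fragment: no proper passage through a
right premise of (□) strictly below it. -/
def InMain (l : Lab) (a : List Bool) : Prop :=
  (l a).isSome ∧ ∀ (b c : List Bool), a = b ++ true :: c →
    (l b).map Prod.fst = some Rule.box → c = []

/-- The local height |π| : the length of the longest branch in the main fragment. -/
noncomputable def height (l : Lab) : ℕ := sSup {n : ℕ | ∃ a : List Bool, InMain l a ∧ a.length = n}

/-- The relations ∼ₙ on ∞-proofs (presented on labellings), defined inductively:
π ∼₀ τ always; a single-node proof is ∼ₙ-related to itself; proofs ending in the same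
instance of (→L), (cut), (→R), (refl) are ∼ₙ-related when their immediate subproofs are;
proofs ending in the same instance of (□) are ∼ₙ₊₁-related when the left-premise subproofs
are ∼ₙ₊₁-related and the right-premise subproofs are ∼ₙ-related. -/
inductive Sim : ℕ → Lab → Lab → Prop
  | zero (l m : Lab) : Sim 0 l m
  | leaf (n : ℕ) (l : Lab) : height l = 0 → Sim n l l
  | bin (n : ℕ) (l m : Lab) (r : Rule) (s : Sequent) :
      (r = Rule.impL ∨ r = Rule.cut) →
      l [] = some (r, s) → m [] = some (r, s) →
      (l [false]).map Prod.snd = (m [false]).map Prod.snd →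
      (l [true]).map Prod.snd = (m [true]).map Prod.snd →
      Sim n (shift false l) (shift false m) → Sim n (shift true l) (shift true m) →
      Sim n l m
  | un (n : ℕ) (l m : Lab) (r : Rule) (s : Sequent) :
      (r = Rule.impR ∨ r = Rule.refl) →
      l [] = some (r, s) → m [] = some (r, s) →
      (l [false]).map Prod.snd = (m [false]).map Prod.snd →
      Sim n (shift false l) (shift false m) →
      Sim n l m
  | box (n : ℕ) (l m : Lab) (s : Sequent) :
      l [] = some (Rule.box, s) → m [] = some (Rule.box, s) →
      (l [false]).map Prod.snd = (m [false]).map Prod.snd →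
      (l [true]).map Prod.snd = (m [true]).map Prod.snd →
      Sim (n + 1) (shift false l) (shift false m) → Sim n (shift true l) (shift true m) →
      Sim (n + 1) l m

/-- The sets 𝒫ₙ of ∞-proofs (presented on labellings), defined inductively:
𝒫₀ is everything; single-node proofs are in every 𝒫ₙ; (→L), (→R), (refl) preserve
membership in 𝒫ₙ; a proof ending in (□) with left-premise subproof in 𝒫ₙ₊₁ and
right-premise subproof in 𝒫ₙ is in 𝒫ₙ₊₁. -/
inductive MemP : ℕ → Lab → Prop
  | zero (l : Lab) : MemP 0 l
  | leaf (n : ℕ) (l : Lab) : height l = 0 → MemP n l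
  | bin (n : ℕ) (l : Lab) (s : Sequent) :
      l [] = some (Rule.impL, s) →
      MemP n (shift false l) → MemP n (shift true l) → MemP n l
  | un (n : ℕ) (l : Lab) (r : Rule) (s : Sequent) :
      (r = Rule.impR ∨ r = Rule.refl) →
      l [] = some (r, s) → MemP n (shift false l) → MemP n l
  | box (n : ℕ) (l : Lab) (s : Sequent) :
      l [] = some (Rule.box, s) →
      MemP (n + 1) (shift false l) → MemP n (shift true l) → MemP (n + 1) l

/- The metric d(π,τ) = 2^(−sup{n : π ∼ₙ τ}), with 2^(−∞) = 0. -/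
open Classical in
noncomputable def pdist (π τ : InfProof) : ℝ :=
  if ∀ n : ℕ, Sim n π.lab τ.lab then 0
  else (2 : ℝ) ^ (-((sSup {n : ℕ | Sim n π.lab τ.lab} : ℕ) : ℤ))

/-- A mapping on ∞-proofs is nonexpansive if it preserves all relations ∼ₙ. -/
def Nonexpansive (f : InfProof → InfProof) : Prop :=
  ∀ (n : ℕ) (π τ : InfProof), Sim n π.lab τ.lab → Sim n (f π).lab (f τ).lab

/-- A mapping is adequate if it is nonexpansive, maps 𝒫₁ into 𝒫₁,
and does not increase local height. -/
def Adequate (f : InfProof → InfProof) : Prop :=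
  Nonexpansive f ∧ (∀ π : InfProof, MemP 1 π.lab → MemP 1 (f π).lab) ∧
    ∀ π : InfProof, height (f π).lab ≤ height π.lab

/-- The set 𝒫₁ of ∞-proofs whose main fragment is cut-free, as a subtype. -/
abbrev P1 : Type := {π : InfProof // MemP 1 π.lab}

/-- An A-reducing mapping: a nonexpansive map ℛ : 𝒫₁ × 𝒫₁ → 𝒫₁ such that
ℛ(π′,π″) proves Γ ⇒ Δ whenever π′ proves Γ ⇒ Δ, A and π″ proves A, Γ ⇒ Δ. -/
def Reducing (A : Formula) (R : P1 → P1 → P1) : Prop :=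
  (∀ (n : ℕ) (p₁ p₂ q₁ q₂ : P1), Sim n p₁.1.lab q₁.1.lab → Sim n p₂.1.lab q₂.1.lab →
      Sim n (R p₁ p₂).1.lab (R q₁ q₂).1.lab) ∧
  ∀ (p₁ p₂ : P1) (Γ Δ : Multiset Formula),
    Proves p₁.1 (Γ, A ::ₘ Δ) → Proves p₂.1 (A ::ₘ Γ, Δ) → Proves (R p₁ p₂).1 (Γ, Δ)

/-- A mapping is root-preserving if it maps ∞-proofs to ∞-proofs of the same sequent. -/
def RootPres (f : InfProof → InfProof) : Prop :=
  ∀ (π : InfProof) (S : Sequent), Proves π S → Proves (f π) S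

/-- The uniform distance on mappings of ∞-proofs. -/
noncomputable def udist (U V : InfProof → InfProof) : ℝ :=
  ⨆ π : InfProof, pdist (U π) (V π)

/- The immediate subproof of `π` at child `i` (junk value `π` if there is none). -/
open Classical in
noncomputable def subtree (π : InfProof) (i : Bool) : InfProof :=
  if h : ∃ τ : InfProof, τ.lab = shift i π.lab then h.choose else π

/-- `IsFOp E F` : `F` is the operator ℱ (relative to the one-step cut-elimination map
`E` = ℰ*) defined by: on proofs with cut-free main fragment it commutes with the last
rule, applying `U` at right premises of (□) and fixing single-node proofs; on other
proofs it first applies `E`. -/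
def IsFOp (E : InfProof → InfProof) (F : (InfProof → InfProof) → InfProof → InfProof) : Prop :=
  ∀ (U : InfProof → InfProof) (π : InfProof),
    (MemP 1 π.lab → height π.lab = 0 → F U π = π) ∧
    (∀ (r : Rule) (s : Sequent), MemP 1 π.lab → π.lab [] = some (r, s) →
        r ≠ Rule.box → r ≠ Rule.cut → height π.lab ≠ 0 →
        (F U π).lab [] = some (r, s) ∧
        shift false (F U π).lab = (F U (subtree π false)).lab ∧
        (r = Rule.impL → shift true (F U π).lab = (F U (subtree π true)).lab)) ∧
    (∀ s : Sequent, MemP 1 π.lab → π.lab [] = some (Rule.box, s) →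
        (F U π).lab [] = some (Rule.box, s) ∧
        shift false (F U π).lab = (F U (subtree π false)).lab ∧
        shift true (F U π).lab = (U (subtree π true)).lab) ∧
    (¬ MemP 1 π.lab → F U π = F U (E π))

/-- Membership in 𝒩ₙ : a root-preserving nonexpansive map whose image lies in 𝒫ₙ. -/
def InN (n : ℕ) (U : InfProof → InfProof) : Prop :=
  Nonexpansive U ∧ RootPres U ∧ ∀ π : InfProof, MemP n (U π).lab

/-- The finitary sequent calculus Grz_Seq (with cut allowed iff the flag is `true`). -/
inductive GrzSeq : Bool → Sequent → Prop
  | ax (c : Bool) (Γ Δ : Multiset Formula) (A : Formula) :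
      GrzSeq c (A ::ₘ Γ, A ::ₘ Δ)
  | bot (c : Bool) (Γ Δ : Multiset Formula) :
      GrzSeq c (Formula.bot ::ₘ Γ, Δ)
  | impL (c : Bool) (Γ Δ : Multiset Formula) (A B : Formula) :
      GrzSeq c (B ::ₘ Γ, Δ) → GrzSeq c (Γ, A ::ₘ Δ) →
      GrzSeq c (Formula.imp A B ::ₘ Γ, Δ)
  | impR (c : Bool) (Γ Δ : Multiset Formula) (A B : Formula) :
      GrzSeq c (A ::ₘ Γ, B ::ₘ Δ) → GrzSeq c (Γ, Formula.imp A B ::ₘ Δ)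
  | refl (c : Bool) (Γ Δ : Multiset Formula) (B : Formula) :
      GrzSeq c (B ::ₘ Formula.box B ::ₘ Γ, Δ) → GrzSeq c (Formula.box B ::ₘ Γ, Δ)
  | grz (c : Bool) (Γ Δ : Multiset Formula) (A : Formula) (P : Multiset Formula) :
      GrzSeq c (Formula.box (Formula.imp A (Formula.box A)) ::ₘ boxed P, {A}) →
      GrzSeq c (Γ + boxed P, Formula.box A ::ₘ Δ)
  | cut (Γ Δ : Multiset Formula) (A : Formula) :
      GrzSeq true (Γ, A ::ₘ Δ) → GrzSeq true (A ::ₘ Γ, Δ) → GrzSeq true (Γ, Δ)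

namespace WkAux

/-- Weakening of a sequent. -/
def g (P S : Multiset Formula) (s : Sequent) : Sequent := (P + s.1, s.2 + S)

/-- `a` lies properly inside a right-premise subtree of a (□) node. -/
def Cond (l : Lab) (a : List Bool) : Prop :=
  ∃ b c, a = b ++ true :: c ∧ (l b).map Prod.fst = some Rule.box

lemma cond_nil (l : Lab) : ¬ Cond l [] := by
  rintro ⟨b, c, h, -⟩
  have := congrArg List.length h
  simp at this

lemma cond_cons_false (l : Lab) (a : List Bool) :
    Cond l (false :: a) ↔ Cond (shift false l) a := by
  constructor
  · rintro ⟨b, c, h, hb⟩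
    cases b with
    | nil => simp at h
    | cons i b' =>
      simp only [List.cons_append, List.cons.injEq] at h
      obtain ⟨rfl, h⟩ := h
      exact ⟨b', c, h, hb⟩
  · rintro ⟨b, c, h, hb⟩
    exact ⟨false :: b, c, by simp [h], hb⟩

lemma cond_cons_true_box (l : Lab) (a : List Bool)
    (h : (l []).map Prod.fst = some Rule.box) : Cond l (true :: a) :=
  ⟨[], a, rfl, h⟩

lemma cond_cons_true (l : Lab) (a : List Bool)
    (h : (l []).map Prod.fst ≠ some Rule.box) :
    Cond l (true :: a) ↔ Cond (shift true l) a := by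
  constructor
  · rintro ⟨b, c, hc, hb⟩
    cases b with
    | nil =>
      exact absurd hb h
    | cons i b' =>
      simp only [List.cons_append, List.cons.injEq] at hc
      obtain ⟨rfl, hc⟩ := hc
      exact ⟨b', c, hc, hb⟩
  · rintro ⟨b, c, h, hb⟩
    exact ⟨true :: b, c, by simp [h], hb⟩

lemma cond_snoc {l : Lab} {a : List Bool} (h : Cond l a) (i : Bool) :
    Cond l (a ++ [i]) := by
  obtain ⟨b, c, rfl, hb⟩ := h
  exact ⟨b, c ++ [i], by simp, hb⟩

lemma cond_snoc_false {l : Lab} {a : List Bool} (h : Cond l (a ++ [false])) :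
    Cond l a := by
  obtain ⟨b, c, hc, hb⟩ := h
  rcases c.eq_nil_or_concat with rfl | ⟨c', x, rfl⟩
  · exact absurd (List.append_inj' hc rfl).2 (by simp)
  · have hc' : a ++ [false] = (b ++ true :: c') ++ [x] := by simp [hc]
    obtain ⟨h1, h2⟩ := List.append_inj' hc' rfl
    exact ⟨b, c', h1, hb⟩

lemma cond_snoc_true {l : Lab} {a : List Bool} (h : Cond l (a ++ [true])) :
    Cond l a ∨ (l a).map Prod.fst = some Rule.box := by
  obtain ⟨b, c, hc, hb⟩ := h
  rcases c.eq_nil_or_concat with rfl | ⟨c', x, rfl⟩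
  · obtain ⟨rfl, -⟩ := List.append_inj' hc rfl
    exact Or.inr hb
  · have hc' : a ++ [true] = (b ++ true :: c') ++ [x] := by simp [hc]
    obtain ⟨h1, h2⟩ := List.append_inj' hc' rfl
    exact Or.inl ⟨b, c', h1, hb⟩

lemma cond_single_false (l : Lab) : ¬ Cond l [false] := fun h =>
  cond_nil l (cond_snoc_false (a := []) h)

lemma cond_single_true (l : Lab) (h : (l []).map Prod.fst ≠ some Rule.box) :
    ¬ Cond l [true] := fun hC =>
  ((cond_snoc_true (a := []) hC).elim (cond_nil l) h)

open Classical in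
/-- The weakened labelling. -/
noncomputable def wkLab (P S : Multiset Formula) (l : Lab) : Lab := fun a =>
  if Cond l a then l a else (l a).map (fun p => (p.1, g P S p.2))

variable (P S : Multiset Formula)

lemma wkLab_of_cond {l : Lab} {a : List Bool} (h : Cond l a) :
    wkLab P S l a = l a := by simp [wkLab, h]

lemma wkLab_of_not {l : Lab} {a : List Bool} (h : ¬ Cond l a) :
    wkLab P S l a = (l a).map (fun p => (p.1, g P S p.2)) := by simp [wkLab, h]

lemma wkLab_nil (l : Lab) :
    wkLab P S l [] = (l []).map (fun p => (p.1, g P S p.2)) :=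
  wkLab_of_not P S (cond_nil l)

lemma wkLab_fst (l : Lab) (a : List Bool) :
    (wkLab P S l a).map Prod.fst = (l a).map Prod.fst := by
  unfold wkLab
  split
  · rfl
  · cases l a <;> rfl

lemma wkLab_isSome (l : Lab) (a : List Bool) :
    (wkLab P S l a).isSome = (l a).isSome := by
  unfold wkLab
  split
  · rfl
  · cases l a <;> rfl

lemma wkLab_none {l : Lab} {a : List Bool} :
    wkLab P S l a = none ↔ l a = none := by
  unfold wkLab
  split
  · rfl
  · cases l a <;> simp

lemma wkLab_snd_of_not {l : Lab} {a : List Bool} (h : ¬ Cond l a) :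
    (wkLab P S l a).map Prod.snd = ((l a).map Prod.snd).map (g P S) := by
  rw [wkLab_of_not P S h]
  cases l a <;> rfl

lemma wkLab_shift_false (l : Lab) :
    shift false (wkLab P S l) = wkLab P S (shift false l) := by
  funext a
  show wkLab P S l (false :: a) = wkLab P S (shift false l) a
  by_cases h : Cond (shift false l) a
  · rw [wkLab_of_cond P S ((cond_cons_false l a).mpr h), wkLab_of_cond P S h]; rfl
  · rw [wkLab_of_not P S (fun h' => h ((cond_cons_false l a).mp h')),
      wkLab_of_not P S h]; rfl

lemma wkLab_shift_true {l : Lab} (h : (l []).map Prod.fst ≠ some Rule.box) :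
    shift true (wkLab P S l) = wkLab P S (shift true l) := by
  funext a
  show wkLab P S l (true :: a) = wkLab P S (shift true l) a
  by_cases h' : Cond (shift true l) a
  · rw [wkLab_of_cond P S ((cond_cons_true l a h).mpr h'), wkLab_of_cond P S h']; rfl
  · rw [wkLab_of_not P S (fun h'' => h' ((cond_cons_true l a h).mp h'')),
      wkLab_of_not P S h']; rfl

lemma wkLab_shift_true_box {l : Lab} (h : (l []).map Prod.fst = some Rule.box) :
    shift true (wkLab P S l) = shift true l := by
  funext a
  exact wkLab_of_cond P S (cond_cons_true_box l a h)

lemma inMain_wk (l : Lab) (a : List Bool) :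
    InMain (wkLab P S l) a ↔ InMain l a := by
  unfold InMain
  rw [wkLab_isSome]
  constructor
  · rintro ⟨h1, h2⟩
    exact ⟨h1, fun b c hb hbox => h2 b c hb (by rw [wkLab_fst]; exact hbox)⟩
  · rintro ⟨h1, h2⟩
    exact ⟨h1, fun b c hb hbox => h2 b c hb (by rw [wkLab_fst] at hbox; exact hbox)⟩

lemma height_wk (l : Lab) : height (wkLab P S l) = height l := by
  unfold height
  congr 1
  ext n
  simp only [Set.mem_setOf_eq, inMain_wk]

lemma inst_g {r : Rule} {s : Sequent} {o₁ o₂ : Option Sequent}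
    (h : Inst r s o₁ o₂) (hr : r ≠ Rule.box) :
    Inst r (g P S s) (o₁.map (g P S)) (o₂.map (g P S)) := by
  cases h with
  | ax Γ Δ p =>
    have : g P S (Formula.atom p ::ₘ Γ, Formula.atom p ::ₘ Δ)
        = (Formula.atom p ::ₘ (P + Γ), Formula.atom p ::ₘ (Δ + S)) := by
      simp [g, Multiset.add_cons, Multiset.cons_add]
    rw [this]
    exact Inst.ax (P + Γ) (Δ + S) p
  | axBot Γ Δ =>
    have : g P S (Formula.bot ::ₘ Γ, Δ) = (Formula.bot ::ₘ (P + Γ), Δ + S) := by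
      simp [g, Multiset.add_cons]
    rw [this]
    exact Inst.axBot (P + Γ) (Δ + S)
  | impL Γ Δ A B =>
    have h1 : g P S (Formula.imp A B ::ₘ Γ, Δ)
        = (Formula.imp A B ::ₘ (P + Γ), Δ + S) := by
      simp [g, Multiset.add_cons]
    have h2 : g P S (B ::ₘ Γ, Δ) = (B ::ₘ (P + Γ), Δ + S) := by
      simp [g, Multiset.add_cons]
    have h3 : g P S (Γ, A ::ₘ Δ) = (P + Γ, A ::ₘ (Δ + S)) := by
      simp [g, Multiset.cons_add]
    rw [h1, Option.map_some, Option.map_some, h2, h3]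
    exact Inst.impL (P + Γ) (Δ + S) A B
  | impR Γ Δ A B =>
    have h1 : g P S (Γ, Formula.imp A B ::ₘ Δ)
        = (P + Γ, Formula.imp A B ::ₘ (Δ + S)) := by
      simp [g, Multiset.cons_add]
    have h2 : g P S (A ::ₘ Γ, B ::ₘ Δ) = (A ::ₘ (P + Γ), B ::ₘ (Δ + S)) := by
      simp [g, Multiset.add_cons, Multiset.cons_add]
    rw [h1, Option.map_some, h2]
    exact Inst.impR (P + Γ) (Δ + S) A B
  | refl Γ Δ A =>
    have h1 : g P S (Formula.box A ::ₘ Γ, Δ)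
        = (Formula.box A ::ₘ (P + Γ), Δ + S) := by
      simp [g, Multiset.add_cons]
    have h2 : g P S (A ::ₘ Formula.box A ::ₘ Γ, Δ)
        = (A ::ₘ Formula.box A ::ₘ (P + Γ), Δ + S) := by
      simp [g, Multiset.add_cons]
    rw [h1, Option.map_some, h2]
    exact Inst.refl (P + Γ) (Δ + S) A
  | box Γ Δ A Q => exact absurd rfl hr
  | cut Γ Δ A =>
    have h1 : g P S (Γ, Δ) = (P + Γ, Δ + S) := rfl
    have h2 : g P S (Γ, A ::ₘ Δ) = (P + Γ, A ::ₘ (Δ + S)) := by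
      simp [g, Multiset.cons_add]
    have h3 : g P S (A ::ₘ Γ, Δ) = (A ::ₘ (P + Γ), Δ + S) := by
      simp [g, Multiset.add_cons]
    rw [h1, Option.map_some, Option.map_some, h2, h3]
    exact Inst.cut (P + Γ) (Δ + S) A

lemma inst_g_box {s : Sequent} {o₁ o₂ : Option Sequent}
    (h : Inst Rule.box s o₁ o₂) :
    Inst Rule.box (g P S s) (o₁.map (g P S)) o₂ := by
  cases h with
  | box Γ Δ A Q =>
    have h1 : g P S (Γ + boxed Q, Formula.box A ::ₘ Δ)
        = ((P + Γ) + boxed Q, Formula.box A ::ₘ (Δ + S)) := by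
      simp [g, Multiset.cons_add, add_assoc]
    have h2 : g P S (Γ + boxed Q, A ::ₘ Δ)
        = ((P + Γ) + boxed Q, A ::ₘ (Δ + S)) := by
      simp [g, Multiset.cons_add, add_assoc]
    rw [h1, Option.map_some, h2]
    exact Inst.box (P + Γ) (Δ + S) A Q

/-- The weakening map on ∞-proofs. -/
noncomputable def wkProof (π : InfProof) : InfProof where
  lab := wkLab P S π.lab
  root_some := by
    rw [wkLab_isSome]
    exact π.root_some
  nojunk a i h :=
    (wkLab_none P S).mpr (π.nojunk a i ((wkLab_none P S).mp h))
  step a r s hs := by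
    by_cases hc : Cond π.lab a
    · rw [wkLab_of_cond P S hc] at hs
      rw [wkLab_of_cond P S (cond_snoc hc false), wkLab_of_cond P S (cond_snoc hc true)]
      exact π.step a r s hs
    · rw [wkLab_of_not P S hc] at hs
      obtain ⟨⟨r₀, s₀⟩, h0, h1⟩ := Option.map_eq_some_iff.mp hs
      obtain ⟨rfl, rfl⟩ : r₀ = r ∧ g P S s₀ = s := by
        simpa [Prod.ext_iff] using h1
      have hstep := π.step a r₀ s₀ h0
      have hfalse : ¬ Cond π.lab (a ++ [false]) := fun h => hc (cond_snoc_false h)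
      rw [wkLab_snd_of_not P S hfalse]
      by_cases hr : r₀ = Rule.box
      · subst hr
        have htrue : Cond π.lab (a ++ [true]) :=
          ⟨a, [], by simp, by rw [h0]; rfl⟩
        rw [wkLab_of_cond P S htrue]
        exact inst_g_box P S hstep
      · have htrue : ¬ Cond π.lab (a ++ [true]) := by
          intro h
          rcases cond_snoc_true h with h' | h'
          · exact hc h'
          · rw [h0] at h'
            exact hr (by simpa using h')
        rw [wkLab_snd_of_not P S htrue]
        exact inst_g P S hstep hr
  branch f hf N := by
    have hf' : ∀ n : ℕ, (π.lab ((List.range n).map f)).isSome := fun n => by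
      have := hf n
      rwa [wkLab_isSome] at this
    obtain ⟨n, hn, hfn, hbox⟩ := π.branch f hf' N
    exact ⟨n, hn, hfn, by rw [wkLab_fst]; exact hbox⟩

lemma root_not_box {l : Lab} {r : Rule} {s : Sequent} (hl : l [] = some (r, s))
    (hr : r ≠ Rule.box) : (l []).map Prod.fst ≠ some Rule.box := by
  rw [hl]
  simpa using hr

lemma sim_wk : ∀ {n : ℕ} {l m : Lab}, Sim n l m → Sim n (wkLab P S l) (wkLab P S m) := by
  intro n l m h
  induction h with
  | zero l m => exact Sim.zero _ _
  | leaf n l h => exact Sim.leaf n _ (by rw [height_wk]; exact h)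
  | bin n l m r s hr hl hm h1 h2 _ _ ih1 ih2 =>
    have hrb : r ≠ Rule.box := by rcases hr with rfl | rfl <;> simp
    have hlb := root_not_box hl hrb
    have hmb := root_not_box hm hrb
    refine Sim.bin n _ _ r (g P S s) hr ?_ ?_ ?_ ?_ ?_ ?_
    · rw [wkLab_nil, hl]; rfl
    · rw [wkLab_nil, hm]; rfl
    · rw [wkLab_snd_of_not P S (cond_single_false l),
        wkLab_snd_of_not P S (cond_single_false m), h1]
    · rw [wkLab_snd_of_not P S (cond_single_true l hlb),
        wkLab_snd_of_not P S (cond_single_true m hmb), h2]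
    · rw [wkLab_shift_false, wkLab_shift_false]; exact ih1
    · rw [wkLab_shift_true P S hlb, wkLab_shift_true P S hmb]; exact ih2
  | un n l m r s hr hl hm h1 _ ih =>
    have hrb : r ≠ Rule.box := by rcases hr with rfl | rfl <;> simp
    have hlb := root_not_box hl hrb
    have hmb := root_not_box hm hrb
    refine Sim.un n _ _ r (g P S s) hr ?_ ?_ ?_ ?_
    · rw [wkLab_nil, hl]; rfl
    · rw [wkLab_nil, hm]; rfl
    · rw [wkLab_snd_of_not P S (cond_single_false l),
        wkLab_snd_of_not P S (cond_single_false m), h1]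
    · rw [wkLab_shift_false, wkLab_shift_false]; exact ih
  | box n l m s hl hm h1 h2 _ hs2 ih1 _ =>
    have hlb : (l []).map Prod.fst = some Rule.box := by rw [hl]; rfl
    have hmb : (m []).map Prod.fst = some Rule.box := by rw [hm]; rfl
    refine Sim.box n _ _ (g P S s) ?_ ?_ ?_ ?_ ?_ ?_
    · rw [wkLab_nil, hl]; rfl
    · rw [wkLab_nil, hm]; rfl
    · rw [wkLab_snd_of_not P S (cond_single_false l),
        wkLab_snd_of_not P S (cond_single_false m), h1]
    · rw [wkLab_of_cond P S (cond_cons_true_box l [] hlb),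
        wkLab_of_cond P S (cond_cons_true_box m [] hmb)]
      exact h2
    · rw [wkLab_shift_false, wkLab_shift_false]; exact ih1
    · rw [wkLab_shift_true_box P S hlb, wkLab_shift_true_box P S hmb]; exact hs2

lemma memP_wk : ∀ {n : ℕ} {l : Lab}, MemP n l → MemP n (wkLab P S l) := by
  intro n l h
  induction h with
  | zero l => exact MemP.zero _
  | leaf n l h => exact MemP.leaf n _ (by rw [height_wk]; exact h)
  | bin n l s hl _ _ ih1 ih2 =>
    have hlb : (l []).map Prod.fst ≠ some Rule.box := root_not_box hl (by simp)
    refine MemP.bin n _ (g P S s) ?_ ?_ ?_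
    · rw [wkLab_nil, hl]; rfl
    · rw [wkLab_shift_false]; exact ih1
    · rw [wkLab_shift_true P S hlb]; exact ih2
  | un n l r s hr hl _ ih =>
    have hrb : r ≠ Rule.box := by rcases hr with rfl | rfl <;> simp
    refine MemP.un n _ r (g P S s) hr ?_ ?_
    · rw [wkLab_nil, hl]; rfl
    · rw [wkLab_shift_false]; exact ih
  | box n l s hl _ h2 ih1 _ =>
    have hlb : (l []).map Prod.fst = some Rule.box := by rw [hl]; rfl
    refine MemP.box n _ (g P S s) ?_ ?_ ?_
    · rw [wkLab_nil, hl]; rfl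
    · rw [wkLab_shift_false]; exact ih1
    · rw [wkLab_shift_true_box P S hlb]; exact h2

end WkAux

/-- weakening is strongly admissible in Grz∞ + cut. -/
theorem weakening_strongly_admissible (P S : Multiset Formula) :
    ∃ f : InfProof → InfProof, Adequate f ∧
      ∀ (π : InfProof) (Γ Δ : Multiset Formula),
        Proves π (Γ, Δ) → Proves (f π) (P + Γ, Δ + S) := by
  refine ⟨WkAux.wkProof P S, ⟨?_, ?_, ?_⟩, ?_⟩
  · intro n π τ h
    exact WkAux.sim_wk P S h
  · intro π h
    exact WkAux.memP_wk P S h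
  · intro π
    exact le_of_eq (WkAux.height_wk P S π.lab)
  · rintro π Γ Δ ⟨r, hr⟩
    refine ⟨r, ?_⟩
    show WkAux.wkLab P S π.lab [] = _
    rw [WkAux.wkLab_nil, hr]
    rfl
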